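/- Let F be a functor from the category of compact Hausdorff spaces and continuous maps to itself which is monomorphic (F sends injective continuous maps to injective continuous maps) and has finite degree n (for every compact Hausdorff space X and every a ∈ F(X) there is a map f : A → X from a finite discrete space A of cardinality at most n with a in the range of F(f)), and suppose F applied to the n-point discrete space is a finite space. Then F preserves metrizability: if X is a metrizable compact Hausdorff space, then F(X) is metrizable. -/

import Mathlib

open CategoryTheory TopologicalSpace

universe u

attribute [local instance] ConcreteCategory.instFunLike

open Filter Topology OnePoint Classical


theorem continuous_of_discrete_snd {α β γ : Type*} [TopologicalSpace α] [TopologicalSpace β]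
    [TopologicalSpace γ] [DiscreteTopology β] {f : α × β → γ}
    (h : ∀ b, Continuous fun a => f (a, b)) : Continuous f := by
  rw [continuous_iff_continuousAt]
  rintro ⟨a, b⟩
  unfold ContinuousAt
  rw [nhds_prod_eq, nhds_discrete (α := β), Filter.prod_pure]
  exact tendsto_map'_iff.mpr ((h b).tendsto a)

theorem clusterPt_eq_of_eventually_eq {γ : Type*} [TopologicalSpace γ] [T1Space γ]
    {u : ℕ → γ} {c y : γ} (h : MapClusterPt c atTop u) (he : ∀ᶠ i in atTop, u i = y) :
    c = y := by
  have h1 : map u atTop ≤ pure y := by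
    rw [Filter.le_pure_iff]
    exact mem_map.mpr (he.mono fun i hi => hi)
  have h2 : ClusterPt c (pure y) := ClusterPt.mono h h1
  have h3 : c ∈ closure ({y} : Set γ) := by
    rw [mem_closure_iff_clusterPt]
    simpa [Filter.principal_singleton] using h2
  simpa [closure_singleton] using h3

theorem secondCountable_of_compact_image {K Y : Type*} [TopologicalSpace K] [TopologicalSpace Y]
    [CompactSpace K] [SecondCountableTopology K] [T2Space Y]
    {f : K → Y} (hf : Continuous f) (hsurj : Function.Surjective f) :
    SecondCountableTopology Y := by
  set B := countableBasis K with hB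
  have hcnt : B.Countable := countable_countableBasis K
  haveI := hcnt.to_subtype
  classical
  let V : Finset B → Set Y := fun s => (f '' (⋃ b ∈ s, (b : Set K))ᶜ)ᶜ
  have hopen : ∀ s, IsOpen (V s) := by
    intro s
    have hW : IsOpen (⋃ b ∈ s, (b : Set K)) :=
      isOpen_biUnion fun b _ => isOpen_of_mem_countableBasis b.2
    have : IsCompact ((⋃ b ∈ s, (b : Set K))ᶜ) := hW.isClosed_compl.isCompact
    exact ((this.image hf).isClosed).isOpen_compl
  have hbasis : TopologicalSpace.IsTopologicalBasis (Set.range V) := by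
    apply TopologicalSpace.isTopologicalBasis_of_isOpen_of_nhds
    · rintro _ ⟨s, rfl⟩; exact hopen s
    · intro y U hyU hU
      have hfib : IsCompact (f ⁻¹' {y}) := (IsClosed.preimage hf isClosed_singleton).isCompact
      -- cover the fiber by basis elements inside f ⁻¹' U
      have hcov : ∀ x ∈ f ⁻¹' {y}, ∃ b : B, x ∈ (b : Set K) ∧ (b : Set K) ⊆ f ⁻¹' U := by
        intro x hx
        have hxU : x ∈ f ⁻¹' U := by
          simp only [Set.mem_preimage, Set.mem_singleton_iff] at hx
          simp [Set.mem_preimage, hx, hyU]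
        obtain ⟨b, hbB, hxb, hbU⟩ :=
          (isBasis_countableBasis K).exists_subset_of_mem_open hxU (hU.preimage hf)
        exact ⟨⟨b, hbB⟩, hxb, hbU⟩
      choose bx hbx1 hbx2 using hcov
      obtain ⟨t, ht⟩ := hfib.elim_finite_subcover
        (fun b : {b : B // (b : Set K) ⊆ f ⁻¹' U} => (b : Set K))
        (fun b => isOpen_of_mem_countableBasis b.1.2)
        (fun x hx => Set.mem_iUnion.mpr ⟨⟨bx x hx, hbx2 x hx⟩, hbx1 x hx⟩)
      refine ⟨V (t.image fun b => b.1), ⟨_, rfl⟩, ?_, ?_⟩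
      · -- y ∈ V s
        intro hy
        obtain ⟨x, hx, hfx⟩ := hy
        apply hx
        have hxfib : x ∈ f ⁻¹' {y} := by simp [Set.mem_preimage, hfx]
        have := ht hxfib
        simp only [Set.mem_iUnion] at this
        obtain ⟨b, hb, hxb⟩ := this
        exact Set.mem_biUnion (Finset.mem_image_of_mem _ hb) hxb
      · -- V s ⊆ U
        intro y' hy'
        obtain ⟨x, rfl⟩ := hsurj y'
        by_cases hxW : x ∈ ⋃ b ∈ t.image fun (b : {b : B // (b : Set K) ⊆ f ⁻¹' U}) => b.1, (b : Set K)
        · simp only [Set.mem_iUnion] at hxW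
          obtain ⟨b, hb, hxb⟩ := hxW
          obtain ⟨b', hb', rfl⟩ := Finset.mem_image.mp hb
          exact b'.2 hxb
        · exact absurd (Set.mem_image_of_mem f hxW) hy'
  exact hbasis.secondCountableTopology (Set.countable_range V)


/-- A morphism out of the `n`-point discrete space, from a bare function. -/
def BasmanovAux.mkHom (n : ℕ) (X : CompHaus.{u}) (g : ULift.{u} (Fin n) → X) :
    CompHaus.of (ULift.{u} (Fin n)) ⟶ X := by
  haveI : DiscreteTopology ↥(CompHaus.of (ULift.{u} (Fin n))) :=
    (inferInstance : DiscreteTopology (ULift.{u} (Fin n)))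
  exact ConcreteCategory.ofHom ⟨g, continuous_of_discreteTopology⟩

@[simp] lemma BasmanovAux.mkHom_apply (n : ℕ) (X : CompHaus.{u}) (g : ULift.{u} (Fin n) → X)
    (k : ULift.{u} (Fin n)) : BasmanovAux.mkHom n X g k = g k := rfl

namespace BasmanovAux

/-- Key continuity: `g ↦ F(g)(b)` is continuous on `X^n`. -/
theorem key_continuity (F : CompHaus.{u} ⥤ CompHaus.{u}) (n : ℕ)
    (hdeg : ∀ (X : CompHaus.{u}) (a : F.obj X), ∃ (A : CompHaus.{u}) (f : A ⟶ X),
      Finite A ∧ DiscreteTopology A ∧ Nat.card A ≤ n ∧ a ∈ Set.range (F.map f))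
    (X : CompHaus.{u}) (hX : MetrizableSpace X)
    (b : F.obj (CompHaus.of (ULift.{u} (Fin n)))) :
    Continuous (fun g : ULift.{u} (Fin n) → X => F.map (mkHom n X g) b) := by
  apply SeqContinuous.continuous
  intro u g hu
  -- the one-point compactification gadget
  let W : CompHaus.{u} := CompHaus.of (ULift.{u} (OnePoint ℕ) × ULift.{u} (Fin n))
  let g' : OnePoint ℕ → (ULift.{u} (Fin n) → X) := fun m => m.elim g u
  have hg' : Continuous g' := by
    rw [OnePoint.continuous_iff_from_nat]
    exact hu
  let G : ULift.{u} (OnePoint ℕ) × ULift.{u} (Fin n) → X := fun p => g' p.1.down p.2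
  have hG : Continuous G := by
    apply continuous_of_discrete_snd
    intro k
    exact (continuous_apply k).comp (hg'.comp continuous_uliftDown)
  let Ghom : W ⟶ X := ConcreteCategory.ofHom ⟨G, hG⟩
  let s : OnePoint ℕ → (CompHaus.of (ULift.{u} (Fin n)) ⟶ W) := fun m => by
    haveI : DiscreteTopology ↥(CompHaus.of (ULift.{u} (Fin n))) :=
      (inferInstance : DiscreteTopology (ULift.{u} (Fin n)))
    exact ConcreteCategory.ofHom ⟨fun k => (ULift.up m, k), continuous_of_discreteTopology⟩
  let e : OnePoint ℕ → F.obj W := fun m => F.map (s m) b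
  have hcomp : ∀ m, s m ≫ Ghom = mkHom n X (g' m) := by
    intro m
    apply ConcreteCategory.hom_ext
    intro k
    rfl
  have hval : ∀ m, F.map (mkHom n X (g' m)) b = F.map Ghom (e m) := by
    intro m
    rw [← hcomp m, F.map_comp]
    rfl
  -- main convergence claim
  have hmain : Tendsto (fun i : ℕ => e i) atTop (𝓝 (e ∞)) := by
    apply tendsto_nhds_of_unique_mapClusterPt
    intro c hc
    obtain ⟨A, f, hAfin, hAdisc, hcard, d, hd⟩ := hdeg W c
    -- choose a bound j for the natural numbers occurring in the image of f
    let h : A → ℕ := fun a => ((f a).1.down).elim 0 id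
    obtain ⟨j, hj⟩ : ∃ j, ∀ a, h a ≤ j := by
      obtain ⟨j, hj⟩ := (Set.finite_range h).bddAbove
      exact ⟨j, fun a => hj (Set.mem_range_self a)⟩
    -- the retraction ρ
    let ρfun : OnePoint ℕ → OnePoint ℕ := fun m => m.elim ∞ (fun i => if i ≤ j then (i : OnePoint ℕ) else ∞)
    have hρ : Continuous ρfun := by
      rw [OnePoint.continuous_iff_from_nat]
      apply Tendsto.congr' (f₁ := fun _ : ℕ => (∞ : OnePoint ℕ))
      · filter_upwards [eventually_gt_atTop j] with i hi
        simp only [ρfun, OnePoint.elim, Option.elim]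
        rw [if_neg (by omega)]
      · exact tendsto_const_nhds
    let ρ : W ⟶ W := ConcreteCategory.ofHom ⟨fun p => (ULift.up (ρfun p.1.down), p.2),
      ((continuous_uliftUp.comp (hρ.comp (continuous_uliftDown.comp continuous_fst))).prodMk
        continuous_snd)⟩
    -- Fact 1 : F.map ρ c = c
    have hfρ : f ≫ ρ = f := by
      apply ConcreteCategory.hom_ext
      intro a
      show (ULift.up (ρfun (f a).1.down), (f a).2) = f a
      have : ρfun (f a).1.down = (f a).1.down := by
        rcases hm : (f a).1.down with _ | i
        · rfl
        · have : i ≤ j := by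
            have := hj a
            simp only [h, hm, OnePoint.elim, Option.elim] at this
            exact this
          simp only [ρfun, OnePoint.elim, Option.elim, if_pos this]
          rfl
      rw [this]
    have hfact1 : F.map ρ c = c := by
      rw [← hd, ← CategoryTheory.comp_apply, ← F.map_comp, hfρ]
    -- Fact 2 : F.map ρ c = e ∞
    have hsρ : ∀ i : ℕ, j < i → s i ≫ ρ = s ∞ := by
      intro i hi
      apply ConcreteCategory.hom_ext
      intro k
      show (ULift.up (ρfun (i : OnePoint ℕ)), k) = (ULift.up (∞ : OnePoint ℕ), k)
      simp only [ρfun, OnePoint.elim, Option.elim]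
      rw [if_neg (by omega)]
    have hc2 : MapClusterPt (F.map ρ c) atTop (fun i : ℕ => F.map ρ (e i)) :=
      hc.continuousAt_comp (ConcreteCategory.hom (F.map ρ)).continuous.continuousAt
    have hfact2 : F.map ρ c = e ∞ := by
      haveI : T2Space (F.obj W) := (F.obj W).is_hausdorff
      haveI : T1Space (F.obj W) := T2Space.t1Space
      apply clusterPt_eq_of_eventually_eq hc2
      filter_upwards [eventually_gt_atTop j] with i hi
      show F.map ρ (F.map (s i) b) = e ∞
      rw [← CategoryTheory.comp_apply, ← F.map_comp, hsρ i hi]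
    rw [← hfact1, hfact2]
  -- conclude
  have h2 : Tendsto (fun i : ℕ => F.map Ghom (e i)) atTop (𝓝 (F.map Ghom (e ∞))) :=
    ((ConcreteCategory.hom (F.map Ghom)).continuous.tendsto (e ∞)).comp hmain
  have heq : (fun i : ℕ => F.map Ghom (e i)) =ᶠ[atTop]
      ((fun g => F.map (mkHom n X g) b) ∘ u) :=
    Eventually.of_forall fun i => (hval i).symm
  show Tendsto _ atTop (𝓝 (F.map (mkHom n X g) b))
  rw [show F.map (mkHom n X g) b = F.map Ghom (e ∞) from hval ∞]
  exact Tendsto.congr' heq h2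

end BasmanovAux

/-- Basmanov-type theorem: a monomorphic functor `F` on the category of compact Hausdorff
spaces, of finite degree `n` with `F` of the `n`-point discrete space finite, preserves
metrizability. -/
theorem functor_finite_degree_preserves_metrizable
    (F : CompHaus.{u} ⥤ CompHaus.{u})
    (hmono : ∀ (X Y : CompHaus.{u}) (f : X ⟶ Y), Function.Injective f →
      Function.Injective (F.map f))
    (n : ℕ)
    (hdeg : ∀ (X : CompHaus.{u}) (a : F.obj X), ∃ (A : CompHaus.{u}) (f : A ⟶ X),
      Finite A ∧ DiscreteTopology A ∧ Nat.card A ≤ n ∧ a ∈ Set.range (F.map f))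
    (hfin : Finite (F.obj (CompHaus.of (ULift.{u} (Fin n)))))
    (X : CompHaus.{u}) (hX : MetrizableSpace X) :
    MetrizableSpace (F.obj X) := by
  by_cases hne : Nonempty X
  case neg =>
    -- `X` is empty: `F X` embeds into the finite space `F Δ`
    have hempty : IsEmpty X := not_nonempty_iff.mp hne
    let j : X ⟶ CompHaus.of (ULift.{u} (Fin n)) :=
      ConcreteCategory.ofHom ⟨fun x => (hempty.false x).elim, by continuity⟩
    have hinj : Function.Injective (F.map j) :=
      hmono _ _ j fun x => (hempty.false x).elim
    haveI : Finite ((forget CompHaus).obj (F.obj (CompHaus.of (ULift.{u} (Fin n))))) := hfin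
    haveI : Finite (F.obj X) := Finite.of_injective _ hinj
    haveI : DiscreteTopology (F.obj X) := by
      haveI : T2Space (F.obj X) := (F.obj X).is_hausdorff
      haveI : T1Space (F.obj X) := T2Space.t1Space
      exact Finite.instDiscreteTopology
    infer_instance
  case pos =>
    obtain ⟨x₀⟩ := hne
    set Δ := CompHaus.of (ULift.{u} (Fin n)) with hΔ
    haveI : Finite ((forget CompHaus).obj (F.obj Δ)) := hfin
    haveI : DiscreteTopology (F.obj Δ) := by
      haveI : T2Space (F.obj Δ) := (F.obj Δ).is_hausdorff
      haveI : T1Space (F.obj Δ) := T2Space.t1Space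
      exact Finite.instDiscreteTopology
    -- the parametrization map
    let Φ : ((ULift.{u} (Fin n) → X) × F.obj Δ) → F.obj X :=
      fun p => F.map (BasmanovAux.mkHom n X p.1) p.2
    have hΦcont : Continuous Φ := by
      apply continuous_of_discrete_snd
      intro b
      exact BasmanovAux.key_continuity F n hdeg X hX b
    have hΦsurj : Function.Surjective Φ := by
      intro a
      obtain ⟨A, f, hAfin, hAdisc, hcard, d, hd⟩ := hdeg X a
      haveI := Fintype.ofFinite A
      rw [Nat.card_eq_fintype_card] at hcard
      obtain ⟨e⟩ := Function.Embedding.nonempty_of_card_le (β := Fin n) (by simpa using hcard)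
      let i : A → ULift.{u} (Fin n) := fun a => ULift.up (e a)
      have hi : Function.Injective i := fun a b hab => e.injective (by simpa [i] using hab)
      let ihom : A ⟶ Δ := ConcreteCategory.ofHom ⟨i, continuous_of_discreteTopology⟩
      let gfun : ULift.{u} (Fin n) → X := Function.extend i f (fun _ => x₀)
      have hgi : ihom ≫ BasmanovAux.mkHom n X gfun = f := by
        apply ConcreteCategory.hom_ext
        intro a
        show gfun (i a) = f a
        exact hi.extend_apply _ _ a
      refine ⟨⟨gfun, F.map ihom d⟩, ?_⟩
      show F.map (BasmanovAux.mkHom n X gfun) (F.map ihom d) = a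
      rw [← CategoryTheory.comp_apply, ← F.map_comp, hgi, hd]
    haveI : SecondCountableTopology (F.obj X) :=
      secondCountable_of_compact_image hΦcont hΦsurj
    haveI : T2Space (F.obj X) := (F.obj X).is_hausdorff
    haveI : CompactSpace (F.obj X) := (F.obj X).is_compact
    haveI : T1Space (F.obj X) := T2Space.t1Space
    haveI : RegularSpace (F.obj X) := inferInstance
    haveI : T3Space (F.obj X) := instT3Space
    exact metrizableSpace_of_t3_secondCountable _
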